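/- arXiv:2512.17071 — 4 statements merged into one kernel-verified Lean document; each statement's English description precedes it below -/
import Mathlib

section
/- Let G be a finite graph on vertex set V, let M, D, K be positive integers with K ≥ 2, let I be a finite index set, and for each i ∈ I let β_i : V × V → ℚ be antisymmetric, supported on edges, with |β_i(u,v)| ≤ M and D·β_i(u,v) ∈ ℤ for every (u,v) ∈ E(G). Fix i₀ ∈ I and m : I → ℤ such that m(i₀) ∈ {1, K} and 2 ≤ m(i) ≤ K−1 for every i ≠ i₀ (so m has one single tight coordinate). If α is a circulation on G satisfying ∑_{(u,v)∈E(G)} α(u,v)·β_{i₀}(u,v) = 0, then the total deficiency over the box vanishes: ∑_{(u,x)∈V_m} def_α(u,x) = 0. -/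
open Finset

lemma aux_sum_antisym {V : Type*} [Fintype V] (G : SimpleGraph V) [DecidableRel G.Adj]
    (g : V → V → ℝ) (hg : ∀ u v, g u v = - g v u) :
    ∑ u : V, ∑ v ∈ Finset.univ.filter (fun v => G.Adj u v), g u v = 0 := by
  have h1 : ∑ u : V, ∑ v ∈ Finset.univ.filter (fun v => G.Adj u v), g u v
      = ∑ u : V, ∑ v : V, if G.Adj u v then g u v else 0 := by
    refine Finset.sum_congr rfl fun u _ => ?_
    rw [Finset.sum_filter]
  rw [h1]
  have h2 : ∑ u : V, ∑ v : V, (if G.Adj u v then g u v else 0)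
      = - ∑ u : V, ∑ v : V, (if G.Adj u v then g u v else 0) := by
    conv_lhs => rw [Finset.sum_comm]
    rw [← Finset.sum_neg_distrib]
    refine Finset.sum_congr rfl fun u _ => ?_
    rw [← Finset.sum_neg_distrib]
    refine Finset.sum_congr rfl fun v _ => ?_
    by_cases h : G.Adj u v
    · simp [h, h.symm, hg v u]
    · rw [if_neg h, if_neg (fun h' => h h'.symm), neg_zero]
  linarith

lemma aux_piFinset_filter {I : Type*} [Fintype I] [DecidableEq I] {δ : I → Type*}
    [∀ i, DecidableEq (δ i)] (s : ∀ i, Finset (δ i)) (p : ∀ i, δ i → Prop)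
    [∀ i, DecidablePred (p i)] :
    (Fintype.piFinset s).filter (fun f => ∀ i, p i (f i))
      = Fintype.piFinset (fun i => (s i).filter (p i)) := by
  ext f
  simp only [Finset.mem_filter, Fintype.mem_piFinset, forall_and]

/-- Deficiency lemma, one single tight coordinate.
Vertices of the box `V_m` are pairs `(u, x)` with `x : I → ℚ`, `D·x(i) ∈ ℤ` and
`M·(m(i)−1) < x(i) ≤ M·m(i)`; we encode `x(i) = t(i)/D` with `t(i) : ℤ` ranging over
`Ioc (D·M·(m(i)−1)) (D·M·m(i))`.  The deficiency of `(u,x)` is the sum of `α(u,v)` over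
those edges `(u,v)` with `0 < x(i) + β_i(u,v) ≤ K·M` for all `i`.  If `m` has one single
tight coordinate `i₀` and the circulation `α` satisfies
`∑_{(u,v)∈E(G)} α(u,v)·β_{i₀}(u,v) = 0`, then the total deficiency over the box is `0`. -/
theorem stmt_0 {V : Type*} [Fintype V] {I : Type*} [Fintype I] [DecidableEq I]
    (G : SimpleGraph V) [DecidableRel G.Adj]
    (M D K : ℕ) (hM : 0 < M) (hD : 0 < D) (hK : 2 ≤ K)
    (β : I → V → V → ℚ)
    (hβanti : ∀ i u v, β i u v = - β i v u)
    (hβsupp : ∀ i u v, ¬ G.Adj u v → β i u v = 0)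
    (hβbound : ∀ i u v, G.Adj u v → |β i u v| ≤ (M : ℚ))
    (hβint : ∀ i u v, G.Adj u v → ∃ z : ℤ, (D : ℚ) * β i u v = (z : ℚ))
    (i₀ : I) (m : I → ℤ)
    (hm₀ : m i₀ = 1 ∨ m i₀ = (K : ℤ))
    (hm : ∀ i, i ≠ i₀ → 2 ≤ m i ∧ m i ≤ (K : ℤ) - 1)
    (α : V → V → ℝ)
    (hαanti : ∀ u v, α u v = - α v u)
    (hαsupp : ∀ u v, ¬ G.Adj u v → α u v = 0)
    (hflow : ∀ u, ∑ v ∈ Finset.univ.filter (fun v => G.Adj u v), α u v = 0)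
    (horth : ∑ u : V, ∑ v ∈ Finset.univ.filter (fun v => G.Adj u v),
        α u v * (β i₀ u v : ℝ) = 0) :
    ∑ u : V, ∑ t ∈ Fintype.piFinset
        (fun i : I => Finset.Ioc ((D : ℤ) * (M : ℤ) * (m i - 1)) ((D : ℤ) * (M : ℤ) * m i)),
      (∑ v ∈ Finset.univ.filter (fun v =>
          G.Adj u v ∧ ∀ i : I, 0 < (t i : ℚ) / (D : ℚ) + β i u v ∧
            (t i : ℚ) / (D : ℚ) + β i u v ≤ (K : ℚ) * (M : ℚ)),
        α u v) = 0 := by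
  classical
  -- integer lift of β
  have hbex : ∀ i u v, ∃ z : ℤ, (D:ℚ) * β i u v = (z:ℚ) := by
    intro i u v
    by_cases h : G.Adj u v
    · exact hβint i u v h
    · exact ⟨0, by simp [hβsupp i u v h]⟩
  choose b hb using hbex
  have hbanti : ∀ i u v, b i v u = - b i u v := by
    intro i u v
    have h1 : ((b i v u : ℤ) : ℚ) = ((-(b i u v) : ℤ) : ℚ) := by
      push_cast
      rw [← hb, ← hb, hβanti i u v]; ring
    exact_mod_cast h1
  have hbbound : ∀ i u v, G.Adj u v → |b i u v| ≤ (D:ℤ) * M := by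
    intro i u v h
    have h1 : |((b i u v : ℤ):ℚ)| ≤ (D:ℚ) * M := by
      rw [← hb, abs_mul, abs_of_nonneg (by positivity : (0:ℚ) ≤ (D:ℚ))]
      exact mul_le_mul_of_nonneg_left (hβbound i u v h) (by positivity)
    have h2 : ((|b i u v| : ℤ) : ℚ) ≤ (((D:ℤ) * M : ℤ) : ℚ) := by push_cast; push_cast at h1; exact h1
    exact_mod_cast h2
  have hDq : (0:ℚ) < (D:ℚ) := by exact_mod_cast hD
  -- condition translation to ℤ
  have hcond : ∀ i (u v : V) (z : ℤ),
      (0 < (z:ℚ)/(D:ℚ) + β i u v ∧ (z:ℚ)/(D:ℚ) + β i u v ≤ (K:ℚ)*(M:ℚ))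
      ↔ (0 < z + b i u v ∧ z + b i u v ≤ (D:ℤ)*K*M) := by
    intro i u v z
    have key : (D:ℚ) * ((z:ℚ)/(D:ℚ) + β i u v) = ((z + b i u v : ℤ) : ℚ) := by
      push_cast
      rw [← hb]
      field_simp
    have e1 : (0 < (z:ℚ)/(D:ℚ) + β i u v) ↔ (0 < z + b i u v) :=
      (mul_pos_iff_of_pos_left hDq).symm.trans (by rw [key]; exact Int.cast_pos)
    have e2 : ((z:ℚ)/(D:ℚ) + β i u v ≤ (K:ℚ)*(M:ℚ)) ↔ (z + b i u v ≤ (D:ℤ)*K*M) := by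
      constructor
      · intro h2
        have h3 := (mul_le_mul_iff_right₀ hDq).mpr h2
        rw [key] at h3
        have h4 : (D:ℚ) * ((K:ℚ)*(M:ℚ)) = (((D:ℤ)*K*M : ℤ) : ℚ) := by push_cast; ring
        rw [h4] at h3
        exact_mod_cast h3
      · intro h2
        have h3 : ((z + b i u v : ℤ) : ℚ) ≤ (((D:ℤ)*K*M : ℤ) : ℚ) := by exact_mod_cast h2
        rw [← key] at h3
        have h4 : (D:ℚ) * ((K:ℚ)*(M:ℚ)) = (((D:ℤ)*K*M : ℤ) : ℚ) := by push_cast; ring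
        rw [← h4] at h3
        exact (mul_le_mul_iff_right₀ hDq).mp h3
    exact and_congr e1 e2
  set DM : ℤ := (D:ℤ) * (M:ℤ) with hDMdef
  have hDMpos : 0 < DM := by positivity
  have step1 : ∀ u : V,
      ∑ t ∈ Fintype.piFinset (fun i : I => Finset.Ioc (DM * (m i - 1)) (DM * m i)),
        (∑ v ∈ Finset.univ.filter (fun v =>
            G.Adj u v ∧ ∀ i : I, 0 < (t i : ℚ) / (D : ℚ) + β i u v ∧
              (t i : ℚ) / (D : ℚ) + β i u v ≤ (K : ℚ) * (M : ℚ)), α u v)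
      = ∑ v ∈ Finset.univ.filter (fun v => G.Adj u v),
          (((Fintype.piFinset (fun i : I => Finset.Ioc (DM * (m i - 1)) (DM * m i))).filter
            (fun t => ∀ i, 0 < t i + b i u v ∧ t i + b i u v ≤ (D:ℤ)*K*M)).card : ℝ) * α u v := by
    intro u
    calc
      ∑ t ∈ Fintype.piFinset (fun i : I => Finset.Ioc (DM * (m i - 1)) (DM * m i)),
        (∑ v ∈ Finset.univ.filter (fun v =>
            G.Adj u v ∧ ∀ i : I, 0 < (t i : ℚ) / (D : ℚ) + β i u v ∧
              (t i : ℚ) / (D : ℚ) + β i u v ≤ (K : ℚ) * (M : ℚ)), α u v)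
        = ∑ t ∈ Fintype.piFinset (fun i : I => Finset.Ioc (DM * (m i - 1)) (DM * m i)),
            ∑ v ∈ Finset.univ.filter (fun v => G.Adj u v),
              if (∀ i : I, 0 < (t i : ℚ) / (D : ℚ) + β i u v ∧
                  (t i : ℚ) / (D : ℚ) + β i u v ≤ (K : ℚ) * (M : ℚ)) then α u v else 0 := by
          refine Finset.sum_congr rfl fun t _ => ?_
          rw [← Finset.filter_filter, Finset.sum_filter]
      _ = ∑ v ∈ Finset.univ.filter (fun v => G.Adj u v),
            ∑ t ∈ Fintype.piFinset (fun i : I => Finset.Ioc (DM * (m i - 1)) (DM * m i)),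
              if (∀ i : I, 0 < (t i : ℚ) / (D : ℚ) + β i u v ∧
                  (t i : ℚ) / (D : ℚ) + β i u v ≤ (K : ℚ) * (M : ℚ)) then α u v else 0 :=
          Finset.sum_comm
      _ = ∑ v ∈ Finset.univ.filter (fun v => G.Adj u v),
          (((Fintype.piFinset (fun i : I => Finset.Ioc (DM * (m i - 1)) (DM * m i))).filter
            (fun t => ∀ i, 0 < t i + b i u v ∧ t i + b i u v ≤ (D:ℤ)*K*M)).card : ℝ) * α u v := by
          refine Finset.sum_congr rfl fun v hv => ?_
          rw [← Finset.sum_filter, Finset.sum_const, nsmul_eq_mul]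
          congr 2
          refine congrArg Finset.card (Finset.filter_congr ?_)
          intro t ht
          exact forall_congr' fun i => hcond i u v (t i)
  -- interval filter
  have hKz : (2:ℤ) ≤ (K:ℤ) := by exact_mod_cast hK
  have hDMK : (D:ℤ)*K*M = DM*K := by rw [hDMdef]; ring
  have hDM2 : 2*DM ≤ DM*K := by nlinarith
  have hDMnat : DM = ((D*M : ℕ) : ℤ) := by rw [hDMdef]; push_cast; ring
  have hIoc : ∀ (lo hi c N : ℤ),
      (Finset.Ioc lo hi).filter (fun z => 0 < z + c ∧ z + c ≤ N)
        = Finset.Ioc (max lo (-c)) (min hi (N - c)) := by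
    intro lo hi c N
    ext z
    simp only [Finset.mem_filter, Finset.mem_Ioc, max_lt_iff, le_min_iff]
    omega
  -- coordinate i ≠ i₀
  have hci : ∀ u v, G.Adj u v → ∀ i, i ≠ i₀ →
      ((Finset.Ioc (DM * (m i - 1)) (DM * m i)).filter
        (fun z => 0 < z + b i u v ∧ z + b i u v ≤ (D:ℤ)*K*M)).card = D * M := by
    intro u v huv i hi
    rw [Finset.filter_true_of_mem, Int.card_Ioc]
    · have h0 : DM * m i - DM * (m i - 1) = DM := by ring
      rw [h0, hDMnat, Int.toNat_natCast]
    · intro z hz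
      rw [Finset.mem_Ioc] at hz
      obtain ⟨h2, h3⟩ := hm i hi
      have hb' := hbbound i u v huv
      rw [abs_le] at hb'
      have l1 : DM * 1 ≤ DM * (m i - 1) := mul_le_mul_of_nonneg_left (by omega) hDMpos.le
      have l2 : DM * m i ≤ DM * ((K:ℤ) - 1) := mul_le_mul_of_nonneg_left (by omega) hDMpos.le
      have l3 : DM * ((K:ℤ)-1) = DM*K - DM := by ring
      rw [hDMK]
      constructor
      · nlinarith [hz.1, hb'.1]
      · nlinarith [hz.2, hb'.2]
  set e : ℤ := if m i₀ = 1 then 1 else -1 with he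
  have he' : e = 1 ∨ e = -1 := by rw [he]; split_ifs <;> simp
  -- coordinate i₀
  have hc0 : ∀ u v, G.Adj u v →
      ((Finset.Ioc (DM * (m i₀ - 1)) (DM * m i₀)).filter
        (fun z => 0 < z + b i₀ u v ∧ z + b i₀ u v ≤ (D:ℤ)*K*M)).card
      = (DM + min (e * b i₀ u v) 0).toNat := by
    intro u v huv
    rw [hIoc, Int.card_Ioc]
    congr 1
    have hb' := hbbound i₀ u v huv
    rw [abs_le] at hb'
    rw [hDMK]
    rcases hm₀ with h1 | h1
    · rw [he, if_pos h1, h1, one_mul]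
      have e0 : DM * ((1:ℤ)-1) = 0 := by ring
      have e1 : DM * (1:ℤ) = DM := by ring
      rw [e0, e1, min_eq_left (by linarith [hb'.2])]
      rcases le_total (b i₀ u v) 0 with h|h
      · rw [max_eq_right (by linarith), min_eq_left (by linarith)]; ring
      · rw [max_eq_left (by linarith), min_eq_right (by linarith)]; ring
    · have hne : m i₀ ≠ 1 := by omega
      rw [he, if_neg hne, h1, neg_one_mul]
      have elo : DM * ((K:ℤ)-1) = DM*K - DM := by ring
      rw [elo, max_eq_left (by linarith [hb'.2])]
      rcases le_total (b i₀ u v) 0 with h|h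
      · rw [min_eq_left (by linarith), min_eq_right (by linarith)]; ring
      · rw [min_eq_right (by linarith), min_eq_left (by linarith)]; ring
  -- nonnegativity of the i₀ count
  have hnn : ∀ u v, G.Adj u v → 0 ≤ DM + min (e * b i₀ u v) 0 := by
    intro u v huv
    have hb' := hbbound i₀ u v huv
    rw [abs_le] at hb'
    have h1 : -DM ≤ e * b i₀ u v := by
      rcases he' with h|h <;> rw [h] <;> linarith [hb'.1, hb'.2]
    have h2 : -DM ≤ min (e * b i₀ u v) 0 := le_min h1 (by linarith)
    linarith
  -- full box count
  have step2 : ∀ u v, G.Adj u v →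
      ((Fintype.piFinset (fun i : I => Finset.Ioc (DM * (m i - 1)) (DM * m i))).filter
            (fun t => ∀ i, 0 < t i + b i u v ∧ t i + b i u v ≤ (D:ℤ)*K*M)).card
      = (DM + min (e * b i₀ u v) 0).toNat * (D*M)^(Fintype.card I - 1) := by
    intro u v huv
    have hsplit : (Fintype.piFinset (fun i : I => Finset.Ioc (DM * (m i - 1)) (DM * m i))).filter
            (fun t => ∀ i, 0 < t i + b i u v ∧ t i + b i u v ≤ (D:ℤ)*K*M)
        = Fintype.piFinset (fun i : I => (Finset.Ioc (DM * (m i - 1)) (DM * m i)).filter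
            (fun z => 0 < z + b i u v ∧ z + b i u v ≤ (D:ℤ)*K*M)) := by
      ext f
      simp only [Finset.mem_filter, Fintype.mem_piFinset, forall_and]
    rw [hsplit, Fintype.card_piFinset,
      ← Finset.mul_prod_erase Finset.univ _ (Finset.mem_univ i₀), hc0 u v huv,
      Finset.prod_congr rfl (fun i hi => hci u v huv i (Finset.ne_of_mem_erase hi)),
      Finset.prod_const, Finset.card_erase_of_mem (Finset.mem_univ i₀), Finset.card_univ]
  have hxe : |((e:ℤ):ℝ)| = 1 := by rcases he' with h|h <;> rw [h] <;> norm_num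
  -- real-valued count
  set CC : ℝ := ((D*M : ℕ) : ℝ)^(Fintype.card I - 1) with hCC
  have hcast : ∀ u v, G.Adj u v →
      ((((Fintype.piFinset (fun i : I => Finset.Ioc (DM * (m i - 1)) (DM * m i))).filter
            (fun t => ∀ i, 0 < t i + b i u v ∧ t i + b i u v ≤ (D:ℤ)*K*M)).card : ℕ) : ℝ)
      = CC * ((DM:ℝ) + ((e:ℤ):ℝ) * ((b i₀ u v : ℤ):ℝ)/2 - |((b i₀ u v : ℤ):ℝ)|/2) := by
    intro u v huv
    rw [step2 u v huv, hCC]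
    have h3 : ((DM + min (e * b i₀ u v) 0).toNat : ℝ)
        = ((DM + min (e * b i₀ u v) 0 : ℤ) : ℝ) := by
      exact_mod_cast congrArg (fun z : ℤ => (z:ℝ)) (Int.toNat_of_nonneg (hnn u v huv))
    push_cast [h3]
    have habs : |((e:ℤ):ℝ) * ((b i₀ u v : ℤ):ℝ)| = |((b i₀ u v : ℤ):ℝ)| := by
      rw [abs_mul, hxe, one_mul]
    have hid : min (((e:ℤ):ℝ) * ((b i₀ u v : ℤ):ℝ)) 0
        = (((e:ℤ):ℝ) * ((b i₀ u v : ℤ):ℝ) - |((b i₀ u v : ℤ):ℝ)|)/2 := by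
      rcases le_total (((e:ℤ):ℝ) * ((b i₀ u v : ℤ):ℝ)) 0 with h|h
      · rw [min_eq_left h, ← habs, abs_of_nonpos h]; ring
      · rw [min_eq_right h, ← habs, abs_of_nonneg h]; ring
    rw [hid]; ring
  -- the three vanishing sums
  have hS1 : ∑ u : V, ∑ v ∈ Finset.univ.filter (fun v => G.Adj u v), α u v = 0 :=
    Finset.sum_eq_zero fun u _ => hflow u
  have hT1 : ∑ u : V, ∑ v ∈ Finset.univ.filter (fun v => G.Adj u v),
      ((b i₀ u v : ℤ):ℝ) * α u v = 0 := by
    have h1 : ∀ u : V, ∀ v ∈ Finset.univ.filter (fun v => G.Adj u v),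
        ((b i₀ u v : ℤ):ℝ) * α u v = (D:ℝ) * (α u v * ((β i₀ u v : ℚ):ℝ)) := by
      intro u v _
      have hr := congrArg (fun q : ℚ => (q:ℝ)) (hb i₀ u v)
      push_cast at hr
      rw [← hr]; ring
    calc ∑ u : V, ∑ v ∈ Finset.univ.filter (fun v => G.Adj u v), ((b i₀ u v : ℤ):ℝ) * α u v
        = ∑ u : V, ∑ v ∈ Finset.univ.filter (fun v => G.Adj u v),
            (D:ℝ) * (α u v * ((β i₀ u v : ℚ):ℝ)) :=
          Finset.sum_congr rfl fun u _ => Finset.sum_congr rfl (h1 u)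
      _ = (D:ℝ) * ∑ u : V, ∑ v ∈ Finset.univ.filter (fun v => G.Adj u v),
            α u v * ((β i₀ u v : ℚ):ℝ) := by
          rw [Finset.mul_sum]
          exact Finset.sum_congr rfl fun u _ => (Finset.mul_sum _ _ _).symm
      _ = 0 := by rw [horth, mul_zero]
  have hT2 : ∑ u : V, ∑ v ∈ Finset.univ.filter (fun v => G.Adj u v),
      |((b i₀ u v : ℤ):ℝ)| * α u v = 0 := by
    refine aux_sum_antisym G _ fun u v => ?_
    rw [hαanti u v, hbanti i₀ u v, Int.cast_neg, abs_neg]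
    ring
  -- final assembly
  calc ∑ u : V, ∑ t ∈ Fintype.piFinset
        (fun i : I => Finset.Ioc (DM * (m i - 1)) (DM * m i)),
      (∑ v ∈ Finset.univ.filter (fun v =>
          G.Adj u v ∧ ∀ i : I, 0 < (t i : ℚ) / (D : ℚ) + β i u v ∧
            (t i : ℚ) / (D : ℚ) + β i u v ≤ (K : ℚ) * (M : ℚ)), α u v)
      = ∑ u : V, ∑ v ∈ Finset.univ.filter (fun v => G.Adj u v),
          (CC * (DM:ℝ) * α u v
            + (CC * ((e:ℤ):ℝ)/2) * (((b i₀ u v : ℤ):ℝ) * α u v)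
            - (CC/2) * (|((b i₀ u v : ℤ):ℝ)| * α u v)) := by
        refine Finset.sum_congr rfl fun u _ => ?_
        rw [step1 u]
        refine Finset.sum_congr rfl fun v hv => ?_
        have huv : G.Adj u v := (Finset.mem_filter.mp hv).2
        rw [hcast u v huv]
        ring
    _ = CC * (DM:ℝ) * (∑ u : V, ∑ v ∈ Finset.univ.filter (fun v => G.Adj u v), α u v)
        + (CC * ((e:ℤ):ℝ)/2) * (∑ u : V, ∑ v ∈ Finset.univ.filter (fun v => G.Adj u v),
            ((b i₀ u v : ℤ):ℝ) * α u v)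
        - (CC/2) * (∑ u : V, ∑ v ∈ Finset.univ.filter (fun v => G.Adj u v),
            |((b i₀ u v : ℤ):ℝ)| * α u v) := by
        simp only [Finset.sum_add_distrib, Finset.sum_sub_distrib, Finset.mul_sum]
    _ = 0 := by rw [hS1, hT1, hT2]; ring
end

section
/- Let H be a real inner product space, let k ≥ 1 be an integer, and let α_1, …, α_k ∈ H satisfy |‖α_i‖² − 1| ≤ 1/(2k) for every i and |⟨α_i, α_j⟩| ≤ 1/(2k) for all i ≠ j. Let γ ∈ H and c ≥ 0 with |⟨γ, α_i⟩| ≤ c for every i. Then there exists a unique vector x ∈ ℝ^k such that γ − ∑_{i=1}^k x_i α_i is orthogonal to every α_j, and this x satisfies |x_i| ≤ 2c for every i. -/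
open scoped RealInnerProductSpace
open Finset Matrix

/-- In a real inner product space, if `|‖αᵢ‖² − 1| ≤ 1/(2k)` and
`|⟨αᵢ, αⱼ⟩| ≤ 1/(2k)` for `i ≠ j`, and `|⟨γ, αᵢ⟩| ≤ c` for all `i` (`c ≥ 0`), then there
is a unique `x ∈ ℝᵏ` with `γ − ∑ xᵢ αᵢ` orthogonal to every `αⱼ`, and it satisfies
`|xᵢ| ≤ 2c` for every `i`. -/
theorem stmt_6 {H : Type*} [NormedAddCommGroup H] [InnerProductSpace ℝ H]
    (k : ℕ) (hk : 1 ≤ k) (α : Fin k → H)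
    (hnorm : ∀ i, |‖α i‖ ^ 2 - 1| ≤ 1 / (2 * (k : ℝ)))
    (horth : ∀ i j, i ≠ j → |⟪α i, α j⟫| ≤ 1 / (2 * (k : ℝ)))
    (γ : H) (c : ℝ) (hc : 0 ≤ c) (hγ : ∀ i, |⟪γ, α i⟫| ≤ c) :
    (∃! x : Fin k → ℝ, ∀ j, ⟪γ - ∑ i, x i • α i, α j⟫ = 0) ∧
    (∀ x : Fin k → ℝ, (∀ j, ⟪γ - ∑ i, x i • α i, α j⟫ = 0) → ∀ i, |x i| ≤ 2 * c) := by
  have hk1 : (1 : ℝ) ≤ (k : ℝ) := by exact_mod_cast hk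
  have hkpos : (0 : ℝ) < 2 * (k : ℝ) := by linarith
  set ε : ℝ := 1 / (2 * (k : ℝ)) with hεdef
  have hεpos : 0 < ε := by positivity
  have hkε : (k : ℝ) * ε = 1 / 2 := by
    rw [hεdef, mul_one_div, div_eq_iff (ne_of_gt hkpos)]; ring
  -- key bound lemma
  have key : ∀ (d : ℝ), 0 ≤ d → ∀ (x : Fin k → ℝ),
      (∀ j, |∑ i, x i * ⟪α i, α j⟫| ≤ d) → ∀ i, |x i| ≤ 2 * d := by
    intro d hd x hx i
    obtain ⟨i0, -, hi0⟩ := Finset.exists_max_image Finset.univ (fun i => |x i|)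
      ⟨i, mem_univ i⟩
    set M : ℝ := |x i0| with hMdef
    have hM0 : 0 ≤ M := abs_nonneg _
    have hMi : |x i| ≤ M := hi0 i (mem_univ i)
    suffices hM : M ≤ 2 * d by linarith
    have hAdiag : 1 - ε ≤ ⟪α i0, α i0⟫ := by
      have h1 := abs_le.mp (hnorm i0)
      have h2 : ⟪α i0, α i0⟫ = ‖α i0‖ ^ 2 := by
        rw [real_inner_self_eq_norm_sq]
      rw [h2]; linarith [h1.1]
    have hAdiag0 : 0 ≤ ⟪α i0, α i0⟫ := real_inner_self_nonneg
    have hsplit : x i0 * ⟪α i0, α i0⟫ =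
        (∑ i, x i * ⟪α i, α i0⟫) - ∑ i ∈ univ.erase i0, x i * ⟪α i, α i0⟫ := by
      rw [← Finset.add_sum_erase _ _ (mem_univ i0)]; ring
    have hoff : |∑ i ∈ univ.erase i0, x i * ⟪α i, α i0⟫| ≤ ((k : ℝ) - 1) * (M * ε) := by
      calc |∑ i ∈ univ.erase i0, x i * ⟪α i, α i0⟫|
          ≤ ∑ i ∈ univ.erase i0, |x i * ⟪α i, α i0⟫| := Finset.abs_sum_le_sum_abs _ _
        _ ≤ ∑ _i ∈ univ.erase i0, M * ε := by
            refine Finset.sum_le_sum fun j hj => ?_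
            rw [abs_mul]
            exact mul_le_mul (hi0 j (mem_univ j)) (horth j i0 (Finset.ne_of_mem_erase hj))
              (abs_nonneg _) hM0
        _ = ((univ.erase i0).card : ℝ) * (M * ε) := by
            rw [Finset.sum_const, nsmul_eq_mul]
        _ = ((k : ℝ) - 1) * (M * ε) := by
            rw [Finset.card_erase_of_mem (mem_univ i0), Finset.card_univ, Fintype.card_fin]
            rw [Nat.cast_sub hk, Nat.cast_one]
    have hmain : M * ⟪α i0, α i0⟫ ≤ d + ((k : ℝ) - 1) * (M * ε) := by
      have h1 : |x i0 * ⟪α i0, α i0⟫| ≤ d + ((k : ℝ) - 1) * (M * ε) := by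
        rw [hsplit]
        calc |(∑ i, x i * ⟪α i, α i0⟫) - ∑ i ∈ univ.erase i0, x i * ⟪α i, α i0⟫|
            ≤ |∑ i, x i * ⟪α i, α i0⟫| + |∑ i ∈ univ.erase i0, x i * ⟪α i, α i0⟫| :=
              abs_sub _ _
          _ ≤ d + ((k : ℝ) - 1) * (M * ε) := add_le_add (hx i0) hoff
      have h2 : M * ⟪α i0, α i0⟫ = |x i0 * ⟪α i0, α i0⟫| := by
        rw [abs_mul, abs_of_nonneg hAdiag0]
      linarith [h1, h2.le]
    -- M * (1 - ε) ≤ d + (k-1) M ε , with k ε = 1/2 gives M/2 ≤ d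
    have hM1 : M * (1 - ε) ≤ d + ((k : ℝ) - 1) * (M * ε) :=
      le_trans (mul_le_mul_of_nonneg_left hAdiag hM0) hmain
    nlinarith [mul_le_mul_of_nonneg_left hkε.le hM0, mul_nonneg hM0 hεpos.le]
  -- the matrix and linear map
  set A : Matrix (Fin k) (Fin k) ℝ := Matrix.of fun i j => ⟪α i, α j⟫ with hAdef
  set L : (Fin k → ℝ) →ₗ[ℝ] (Fin k → ℝ) := Matrix.mulVecLin Aᵀ with hLdef
  have hLx : ∀ (x : Fin k → ℝ) j, L x j = ∑ i, x i * ⟪α i, α j⟫ := by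
    intro x j
    simp [hLdef, Matrix.mulVecLin, Matrix.mulVec, Matrix.transpose, dotProduct, hAdef,
      mul_comm]
  have hinj : Function.Injective L := by
    rw [← LinearMap.ker_eq_bot, LinearMap.ker_eq_bot']
    intro x hx0
    have hz : ∀ i, |x i| ≤ 2 * 0 := by
      refine key 0 le_rfl x fun j => ?_
      have : L x j = 0 := by rw [hx0]; rfl
      rw [hLx] at this
      simp [this]
    funext i
    have := hz i
    simpa using abs_nonpos_iff.mp (by linarith)
  have hsurj : Function.Surjective L := (LinearMap.injective_iff_surjective).mp hinj
  obtain ⟨x₀, hx₀⟩ := hsurj (fun j => ⟪γ, α j⟫)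
  have hcond : ∀ (x : Fin k → ℝ) j,
      ⟪γ - ∑ i, x i • α i, α j⟫ = ⟪γ, α j⟫ - ∑ i, x i * ⟪α i, α j⟫ := by
    intro x j
    rw [inner_sub_left, sum_inner]
    simp [real_inner_smul_left]
  have hsol : ∀ (x : Fin k → ℝ), (∀ j, ⟪γ - ∑ i, x i • α i, α j⟫ = 0) ↔ L x = fun j => ⟪γ, α j⟫ := by
    intro x
    constructor
    · intro h
      funext j
      have := h j
      rw [hcond] at this
      rw [hLx]
      linarith
    · intro h j
      rw [hcond]
      have : L x j = ⟪γ, α j⟫ := by rw [h]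
      rw [hLx] at this
      linarith
  constructor
  · refine ⟨x₀, ?_, ?_⟩
    · exact (hsol x₀).mpr hx₀
    · intro y hy
      exact hinj (by rw [(hsol y).mp hy, hx₀])
  · intro x hx i
    refine key c hc x (fun j => ?_) i
    have := (hsol x).mp hx
    have h2 : L x j = ⟪γ, α j⟫ := by rw [this]
    rw [hLx] at h2
    rw [h2]
    exact hγ j
end

section
/- For integers d ≥ 2 and m ≥ 1, the gadget graph Gad(2d, m) admits an orientation that is balanced everywhere except at u and v: there exists an antisymmetric function σ on pairs of vertices with σ(x,y) ∈ {1, −1} whenever x and y are adjacent and σ(x,y) = 0 otherwise, such that ∑_{y adjacent to x} σ(x,y) = 0 for every vertex x ∉ {u,v}, while ∑_{y adjacent to u} σ(u,y) = 1 and ∑_{y adjacent to v} σ(v,y) = −1. Equivalently, every vertex other than u and v has in-degree and out-degree both equal to d, u has out-degree d and in-degree d−1, and v has in-degree d and out-degree d−1. -/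
/-- Vertices of the gadget graph `Gad(d,m)`: two distinguished vertices `u`, `v` and the
internal vertices `(i,j)`, encoded with `i : Fin (2m)` (representing the label `i+1 ∈
{1,…,2m}`) and `j : Fin (d−1)` (representing the label `j+1 ∈ {1,…,d−1}`). -/
inductive GadV (d m : ℕ) where
  | u : GadV d m
  | v : GadV d m
  | inner : Fin (2 * m) → Fin (d - 1) → GadV d m
  deriving DecidableEq

/-- The base (asymmetric) edge relation of the gadget graph, in terms of the 1-based
labels `a = i+1`: `u` is adjacent to the vertices with label `1`, `v` to those with
label `2m`, consecutive labels `a, a+1` are completely joined when `a` is odd, and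
joined by the parallel edges `j = j'` when `a` is even. -/
def gadRel (d m : ℕ) : GadV d m → GadV d m → Prop
  | GadV.u, GadV.inner i _ => i.val = 0
  | GadV.v, GadV.inner i _ => i.val + 1 = 2 * m
  | GadV.inner i j, GadV.inner i' j' =>
      i'.val = i.val + 1 ∧ (Odd (i.val + 1) ∨ j = j')
  | _, _ => False

/-- The gadget graph `Gad(d,m)`. -/
def Gad (d m : ℕ) : SimpleGraph (GadV d m) := SimpleGraph.fromRel (gadRel d m)

/-- column sign: `+1` on the first `d` columns, `-1` on the remaining `d-1`. -/
def rcol (d : ℕ) (j : Fin (2 * d - 1)) : ℝ := if (j : ℕ) < d then 1 else -1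

lemma rcol_pm (d : ℕ) (j : Fin (2 * d - 1)) : rcol d j = 1 ∨ rcol d j = -1 := by
  unfold rcol; split <;> simp

lemma sum_rcol (d : ℕ) (hd : 1 ≤ d) : ∑ j : Fin (2 * d - 1), rcol d j = 1 := by
  have h : ∀ j : Fin (2 * d - 1), rcol d j
      = (if (j : ℕ) < d then (2 : ℝ) else 0) - 1 := by
    intro j; unfold rcol; split <;> norm_num
  simp only [h, Finset.sum_sub_distrib, Finset.sum_const, Finset.card_univ,
    Fintype.card_fin, nsmul_eq_mul, mul_one]
  rw [Fin.sum_univ_eq_sum_range (fun k => if k < d then (2 : ℝ) else 0)]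
  rw [← Finset.sum_filter]
  have hf : (Finset.range (2 * d - 1)).filter (· < d) = Finset.range d := by
    ext k; simp; omega
  rw [hf, Finset.sum_const, Finset.card_range, Nat.cast_sub (by omega)]
  push_cast
  ring

/-- the orientation -/
def sig (d m : ℕ) : GadV (2 * d) m → GadV (2 * d) m → ℝ
  | GadV.u, GadV.inner i j => if (i : ℕ) = 0 then rcol d j else 0
  | GadV.inner i j, GadV.u => if (i : ℕ) = 0 then -(rcol d j) else 0
  | GadV.v, GadV.inner i j => if (i : ℕ) + 1 = 2 * m then -(rcol d j) else 0
  | GadV.inner i j, GadV.v => if (i : ℕ) + 1 = 2 * m then rcol d j else 0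
  | GadV.inner i j, GadV.inner i' j' =>
      if (i' : ℕ) = (i : ℕ) + 1 then
        (if Odd ((i : ℕ) + 1) then rcol d j * rcol d j'
         else if j = j' then rcol d j else 0)
      else if (i : ℕ) = (i' : ℕ) + 1 then
        -(if Odd ((i' : ℕ) + 1) then rcol d j' * rcol d j
          else if j' = j then rcol d j' else 0)
      else 0
  | _, _ => 0

lemma sig_antisymm (d m : ℕ) (x y : GadV (2 * d) m) : sig d m x y = - sig d m y x := by
  cases x <;> cases y <;> simp only [sig, neg_zero, neg_neg]
  case u.inner i j => split <;> simp
  case inner.u i j => split <;> simp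
  case v.inner i j => split <;> simp
  case inner.v i j => split <;> simp
  case inner.inner i j i' j' =>
    by_cases h1 : (i' : ℕ) = (i : ℕ) + 1
    · have h2 : ¬ ((i : ℕ) = (i' : ℕ) + 1) := by omega
      rw [if_pos h1, if_neg h2, if_pos h1, neg_neg]
    · by_cases h2 : (i : ℕ) = (i' : ℕ) + 1
      · rw [if_neg h1, if_pos h2, if_pos h2]
      · rw [if_neg h1, if_neg h2, if_neg h2, if_neg h1, neg_zero]

lemma sig_adj (d m : ℕ) (x y : GadV (2 * d) m) (h : (Gad (2 * d) m).Adj x y) :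
    sig d m x y = 1 ∨ sig d m x y = -1 := by
  rw [Gad, SimpleGraph.fromRel_adj] at h
  obtain ⟨hne, hrel⟩ := h
  cases x <;> cases y <;> simp only [gadRel, or_self, or_false, false_or] at hrel <;>
    try exact hrel.elim
  case u.inner i j =>
    simp only [sig, if_pos hrel]; exact rcol_pm d j
  case inner.u i j =>
    simp only [sig, if_pos hrel]
    rcases rcol_pm d j with h' | h' <;> simp [h']
  case v.inner i j =>
    simp only [sig, if_pos hrel]
    rcases rcol_pm d j with h' | h' <;> simp [h']
  case inner.v i j =>
    simp only [sig, if_pos hrel]; exact rcol_pm d j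
  case inner.inner i j i' j' =>
    rcases hrel with ⟨h1, h2⟩ | ⟨h1, h2⟩
    · simp only [sig, if_pos h1]
      by_cases ho : Odd ((i : ℕ) + 1)
      · rw [if_pos ho]
        rcases rcol_pm d j with ha | ha <;> rcases rcol_pm d j' with hb | hb <;>
          simp [ha, hb]
      · have hj : j = j' := h2.resolve_left ho
        rw [if_neg ho, if_pos hj]; exact rcol_pm d j
    · have h1' : ¬ ((i' : ℕ) = (i : ℕ) + 1) := by omega
      simp only [sig, if_neg h1', if_pos h1]
      by_cases ho : Odd ((i' : ℕ) + 1)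
      · rw [if_pos ho]
        rcases rcol_pm d j with ha | ha <;> rcases rcol_pm d j' with hb | hb <;>
          simp [ha, hb]
      · have hj : j' = j := h2.resolve_left ho
        rw [if_neg ho, if_pos hj]
        rcases rcol_pm d j' with ha | ha <;> simp [ha]

lemma sig_nonadj (d m : ℕ) (x y : GadV (2 * d) m) (h : ¬ (Gad (2 * d) m).Adj x y) :
    sig d m x y = 0 := by
  rw [Gad, SimpleGraph.fromRel_adj] at h
  cases x <;> cases y <;> simp only [sig] <;> try rfl
  case u.inner i j =>
    rw [if_neg]
    intro h0
    exact h ⟨fun hc => (by cases hc), Or.inl h0⟩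
  case inner.u i j =>
    rw [if_neg]
    intro h0
    exact h ⟨fun hc => (by cases hc), Or.inr h0⟩
  case v.inner i j =>
    rw [if_neg]
    intro h0
    exact h ⟨fun hc => (by cases hc), Or.inl h0⟩
  case inner.v i j =>
    rw [if_neg]
    intro h0
    exact h ⟨fun hc => (by cases hc), Or.inr h0⟩
  case inner.inner i j i' j' =>
    by_cases h1 : (i' : ℕ) = (i : ℕ) + 1
    · have hne : GadV.inner (d := 2 * d) (m := m) i j ≠ GadV.inner i' j' := by
        intro hc
        injection hc with hi hj
        omega
      have hnr : ¬ (Odd ((i : ℕ) + 1) ∨ j = j') := by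
        intro hor
        exact h ⟨hne, Or.inl ⟨h1, hor⟩⟩
      push_neg at hnr
      rw [if_pos h1, if_neg hnr.1, if_neg hnr.2]
    · rw [if_neg h1]
      by_cases h2 : (i : ℕ) = (i' : ℕ) + 1
      · have hne : GadV.inner (d := 2 * d) (m := m) i j ≠ GadV.inner i' j' := by
          intro hc
          injection hc with hi hj
          omega
        have hnr : ¬ (Odd ((i' : ℕ) + 1) ∨ j' = j) := by
          intro hor
          exact h ⟨hne, Or.inr ⟨h2, hor⟩⟩
        push_neg at hnr
        rw [if_pos h2, if_neg hnr.1, if_neg hnr.2, neg_zero]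
      · rw [if_neg h2]

def gadEquiv (d m : ℕ) : GadV d m ≃ (Unit ⊕ Unit ⊕ Fin (2 * m) × Fin (d - 1)) where
  toFun x := match x with
    | .u => .inl ()
    | .v => .inr (.inl ())
    | .inner i j => .inr (.inr (i, j))
  invFun z := match z with
    | .inl _ => .u
    | .inr (.inl _) => .v
    | .inr (.inr (i, j)) => .inner i j
  left_inv x := by cases x <;> rfl
  right_inv z := by rcases z with _ | (_ | ⟨i, j⟩) <;> rfl

noncomputable instance gadFintype (d m : ℕ) : Fintype (GadV d m) :=
  Fintype.ofEquiv _ (gadEquiv d m).symm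

lemma gad_sum (d m : ℕ) (f : GadV d m → ℝ) :
    ∑ y : GadV d m, f y
      = f GadV.u + f GadV.v + ∑ i : Fin (2 * m), ∑ j : Fin (d - 1), f (GadV.inner i j) := by
  rw [← (gadEquiv d m).symm.sum_comp f]
  rw [Fintype.sum_sum_type, Fintype.sum_sum_type, Fintype.sum_prod_type]
  simp [gadEquiv, add_assoc]

/-- Row sum of `sig` over one inner layer. -/
lemma sig_row_u (d m : ℕ) (hd : 1 ≤ d) (i' : Fin (2 * m)) :
    ∑ j' : Fin (2 * d - 1), sig d m GadV.u (GadV.inner i' j')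
      = if (i' : ℕ) = 0 then 1 else 0 := by
  simp only [sig]
  by_cases h : (i' : ℕ) = 0
  · simp only [if_pos h]; exact sum_rcol d hd
  · simp only [if_neg h, Finset.sum_const_zero]

lemma sig_row_v (d m : ℕ) (hd : 1 ≤ d) (i' : Fin (2 * m)) :
    ∑ j' : Fin (2 * d - 1), sig d m GadV.v (GadV.inner i' j')
      = if (i' : ℕ) + 1 = 2 * m then -1 else 0 := by
  simp only [sig]
  by_cases h : (i' : ℕ) + 1 = 2 * m
  · simp only [if_pos h, Finset.sum_neg_distrib]
    rw [sum_rcol d hd]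
  · simp only [if_neg h, Finset.sum_const_zero]

lemma sig_row_inner (d m : ℕ) (hd : 1 ≤ d) (i : Fin (2 * m)) (j : Fin (2 * d - 1))
    (i' : Fin (2 * m)) :
    ∑ j' : Fin (2 * d - 1), sig d m (GadV.inner i j) (GadV.inner i' j')
      = if (i' : ℕ) = (i : ℕ) + 1 then rcol d j
        else if (i : ℕ) = (i' : ℕ) + 1 then -(rcol d j) else 0 := by
  simp only [sig]
  by_cases h1 : (i' : ℕ) = (i : ℕ) + 1
  · simp only [if_pos h1]
    by_cases ho : Odd ((i : ℕ) + 1)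
    · simp only [if_pos ho, ← Finset.mul_sum, sum_rcol d hd, mul_one]
    · simp only [if_neg ho]
      rw [Finset.sum_ite_eq (Finset.univ) j (fun _ => rcol d j)]
      simp
  · simp only [if_neg h1]
    by_cases h2 : (i : ℕ) = (i' : ℕ) + 1
    · simp only [if_pos h2]
      by_cases ho : Odd ((i' : ℕ) + 1)
      · simp only [if_pos ho]
        rw [Finset.sum_neg_distrib, ← Finset.sum_mul, sum_rcol d hd, one_mul]
      · simp only [if_neg ho]
        rw [Finset.sum_neg_distrib, Finset.sum_ite_eq' (Finset.univ) j (fun j' => rcol d j')]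
        simp
    · simp only [if_neg h2, Finset.sum_const_zero]

lemma total_u (d m : ℕ) (hd : 1 ≤ d) (hm : 1 ≤ m) :
    ∑ y : GadV (2 * d) m, sig d m GadV.u y = 1 := by
  rw [gad_sum]
  simp only [sig_row_u d m hd]
  have h0 : sig d m GadV.u GadV.u = 0 := rfl
  have h1 : sig d m GadV.u GadV.v = 0 := rfl
  rw [h0, h1, zero_add, zero_add]
  rw [Fin.sum_univ_eq_sum_range (fun k => if k = 0 then (1 : ℝ) else 0)]
  rw [Finset.sum_ite_eq' (Finset.range (2 * m)) 0 (fun _ => (1 : ℝ))]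
  rw [if_pos (Finset.mem_range.mpr (by omega))]

lemma total_v (d m : ℕ) (hd : 1 ≤ d) (hm : 1 ≤ m) :
    ∑ y : GadV (2 * d) m, sig d m GadV.v y = -1 := by
  rw [gad_sum]
  simp only [sig_row_v d m hd]
  have h0 : sig d m GadV.v GadV.u = 0 := rfl
  have h1 : sig d m GadV.v GadV.v = 0 := rfl
  rw [h0, h1, zero_add, zero_add]
  rw [Fin.sum_univ_eq_sum_range (fun k => if k + 1 = 2 * m then (-1 : ℝ) else 0)]
  have hcongr : ∀ k ∈ Finset.range (2 * m),
      (if k + 1 = 2 * m then (-1 : ℝ) else 0) = (if k = 2 * m - 1 then (-1 : ℝ) else 0) := by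
    intro k _
    by_cases h : k + 1 = 2 * m
    · rw [if_pos h, if_pos (by omega)]
    · rw [if_neg h, if_neg (by omega)]
  rw [Finset.sum_congr rfl hcongr]
  rw [Finset.sum_ite_eq' (Finset.range (2 * m)) (2 * m - 1) (fun _ => (-1 : ℝ))]
  rw [if_pos (Finset.mem_range.mpr (by omega))]

lemma total_inner (d m : ℕ) (hd : 1 ≤ d) (hm : 1 ≤ m) (i : Fin (2 * m))
    (j : Fin (2 * d - 1)) :
    ∑ y : GadV (2 * d) m, sig d m (GadV.inner i j) y = 0 := by
  rw [gad_sum]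
  simp only [sig_row_inner d m hd]
  have h0 : sig d m (GadV.inner i j) GadV.u
      = if (i : ℕ) = 0 then -(rcol d j) else 0 := rfl
  have h1 : sig d m (GadV.inner i j) GadV.v
      = if (i : ℕ) + 1 = 2 * m then rcol d j else 0 := rfl
  rw [h0, h1]
  have hsplit : ∀ k ∈ Finset.range (2 * m),
      (if k = (i : ℕ) + 1 then rcol d j
        else if (i : ℕ) = k + 1 then -(rcol d j) else 0)
      = (if k = (i : ℕ) + 1 then rcol d j else 0)
        + (if 0 < (i : ℕ) then (if k = (i : ℕ) - 1 then -(rcol d j) else 0) else 0) := by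
    intro k _
    split_ifs <;> first | (exfalso; omega) | ring
  rw [Fin.sum_univ_eq_sum_range (fun k => if k = (i : ℕ) + 1 then rcol d j
        else if (i : ℕ) = k + 1 then -(rcol d j) else 0)]
  rw [Finset.sum_congr rfl hsplit, Finset.sum_add_distrib]
  rw [Finset.sum_ite_eq' (Finset.range (2 * m)) ((i : ℕ) + 1) (fun _ => rcol d j)]
  have hlt : (i : ℕ) < 2 * m := i.isLt
  by_cases hi : 0 < (i : ℕ)
  · simp only [if_pos hi]
    rw [Finset.sum_ite_eq' (Finset.range (2 * m)) ((i : ℕ) - 1) (fun _ => -(rcol d j))]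
    rw [if_pos (Finset.mem_range.mpr (show (i : ℕ) - 1 < 2 * m by omega))]
    rw [if_neg (by omega : ¬ (i : ℕ) = 0)]
    by_cases h2 : (i : ℕ) + 1 = 2 * m
    · rw [if_pos h2,
        if_neg (show (i : ℕ) + 1 ∉ Finset.range (2 * m) by
          simp only [Finset.mem_range]; omega)]
      ring
    · rw [if_neg h2, if_pos (Finset.mem_range.mpr (show (i : ℕ) + 1 < 2 * m by omega))]
      ring
  · simp only [if_neg hi, Finset.sum_const_zero]
    rw [if_pos (by omega : (i : ℕ) = 0), if_neg (by omega : ¬ (i : ℕ) + 1 = 2 * m),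
      if_pos (Finset.mem_range.mpr (show (i : ℕ) + 1 < 2 * m by omega))]
    ring

lemma finsum_nbhd (d m : ℕ) (x : GadV (2 * d) m) :
    ∑ᶠ y ∈ (Gad (2 * d) m).neighborSet x, sig d m x y
      = ∑ y : GadV (2 * d) m, sig d m x y := by
  rw [finsum_mem_def, Set.indicator_eq_self.mpr ?_, finsum_eq_sum_of_fintype]
  intro y hy
  by_contra hmem
  exact hy (sig_nonadj d m x y hmem)

/-- For `d ≥ 2` and `m ≥ 1` the gadget graph `Gad(2d,m)` admits an
orientation `σ` (antisymmetric, `±1` on adjacent pairs, `0` otherwise) which is balanced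
at every vertex except `u` and `v`, with `∑_{y ~ u} σ(u,y) = 1` and
`∑_{y ~ v} σ(v,y) = −1` (so `u` has out-degree `d` and in-degree `d−1`, and `v` has
in-degree `d` and out-degree `d−1`). -/
theorem stmt_17 (d m : ℕ) (hd : 2 ≤ d) (hm : 1 ≤ m) :
    ∃ σ : GadV (2 * d) m → GadV (2 * d) m → ℝ,
      (∀ x y, σ x y = - σ y x) ∧
      (∀ x y, (Gad (2 * d) m).Adj x y → (σ x y = 1 ∨ σ x y = -1)) ∧
      (∀ x y, ¬ (Gad (2 * d) m).Adj x y → σ x y = 0) ∧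
      (∀ x, x ≠ GadV.u → x ≠ GadV.v →
        ∑ᶠ y ∈ (Gad (2 * d) m).neighborSet x, σ x y = 0) ∧
      (∑ᶠ y ∈ (Gad (2 * d) m).neighborSet GadV.u, σ GadV.u y = 1) ∧
      (∑ᶠ y ∈ (Gad (2 * d) m).neighborSet GadV.v, σ GadV.v y = -1) := by
  refine ⟨sig d m, sig_antisymm d m, sig_adj d m, sig_nonadj d m, ?_, ?_, ?_⟩
  · intro x hu hv
    cases x with
    | u => exact absurd rfl hu
    | v => exact absurd rfl hv
    | inner i j => rw [finsum_nbhd]; exact total_inner d m (by omega) hm i j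
  · rw [finsum_nbhd]; exact total_u d m (by omega) hm
  · rw [finsum_nbhd]; exact total_v d m (by omega) hm
end

section
/- For integers d ≥ 3, m ≥ 1, and any color i ∈ {1,…,d}, the gadget graph Gad(d,m) admits a proper edge coloring with colors {1,…,d} such that every vertex of the form (l,j) with l ∈ {1,…,2m}, j ∈ {1,…,d−1} is incident to edges of all d colors, and no edge incident to u and no edge incident to v receives the color i (so u and v each miss exactly the color i). -/
/-- Natural-number "pre-color" of a (potential) edge. -/
def gBase (d m s : ℕ) : GadV d m → GadV d m → ℕ
  | GadV.u, GadV.inner _ j => j.val + s + 1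
  | GadV.inner _ j, GadV.u => j.val + s + 1
  | GadV.v, GadV.inner _ j => j.val + s + 1
  | GadV.inner _ j, GadV.v => j.val + s + 1
  | GadV.inner l j, GadV.inner l' j' =>
      if Even (min l.val l'.val) then j.val + j'.val + s + 2
      else min j.val j'.val + s + 1
  | _, _ => 0

private lemma modNe {d a b : ℕ} (k : ℕ) (ha : a < d) (hb : b < d) (hab : a ≠ b) :
    (a + k) % d ≠ (b + k) % d := by
  intro h
  have h2 : a % d = b % d := Nat.ModEq.add_right_cancel' k h
  rw [Nat.mod_eq_of_lt ha, Nat.mod_eq_of_lt hb] at h2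
  exact hab h2

private lemma modSurj {d : ℕ} (hd : 0 < d) (a : ℕ) {c : ℕ} (hc : c < d) :
    ∃ t, t < d ∧ (a + t) % d = c := by
  refine ⟨(c + d - a % d) % d, Nat.mod_lt _ hd, ?_⟩
  rw [Nat.add_mod_mod]
  have h1 : a % d + d * (a / d) = a := Nat.mod_add_div a d
  have h2 : a % d < d := Nat.mod_lt _ hd
  have h3 : a + (c + d - a % d) = c + d + d * (a / d) := by
    generalize d * (a / d) = K at h1 ⊢; omega
  rw [h3, Nat.add_mul_mod_self_left, Nat.add_mod_right, Nat.mod_eq_of_lt hc]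

/-- For `d ≥ 3`, `m ≥ 1` and any color `i`, the gadget graph `Gad(d,m)`
admits a proper edge coloring with `d` colors (given as a symmetric function on adjacent
pairs) such that every internal vertex is incident to edges of all `d` colors, while no
edge incident to `u`, and no edge incident to `v`, receives the color `i`. -/
theorem stmt_18 (d m : ℕ) (hd : 3 ≤ d) (hm : 1 ≤ m) (i : Fin d) :
    ∃ col : GadV d m → GadV d m → Fin d,
      (∀ x y, col x y = col y x) ∧
      (∀ x y z, (Gad d m).Adj x y → (Gad d m).Adj x z → y ≠ z →
        col x y ≠ col x z) ∧
      (∀ (l : Fin (2 * m)) (j : Fin (d - 1)) (c : Fin d),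
        ∃ y, (Gad d m).Adj (GadV.inner l j) y ∧ col (GadV.inner l j) y = c) ∧
      (∀ y, (Gad d m).Adj GadV.u y → col GadV.u y ≠ i) ∧
      (∀ y, (Gad d m).Adj GadV.v y → col GadV.v y ≠ i) := by
  have hd0 : 0 < d := by omega
  set s := i.val with hs
  have hsd : s < d := i.isLt
  have hadj : ∀ x y, (Gad d m).Adj x y ↔ x ≠ y ∧ (gadRel d m x y ∨ gadRel d m y x) :=
    fun x y => SimpleGraph.fromRel_adj _ _ _
  have key : ∀ (a b k : ℕ), a < d → b < d → a ≠ b → ∀ v1 v2, v1 = a + k → v2 = b + k →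
      (⟨v1 % d, Nat.mod_lt _ hd0⟩ : Fin d) ≠ (⟨v2 % d, Nat.mod_lt _ hd0⟩ : Fin d) := by
    rintro a b k ha hb hab v1 v2 rfl rfl hcol
    rw [Fin.mk.injEq] at hcol
    exact modNe k ha hb hab hcol
  refine ⟨fun x y => ⟨gBase d m s x y % d, Nat.mod_lt _ hd0⟩, ?_, ?_, ?_, ?_, ?_⟩
  · -- symmetry
    intro x y
    apply Fin.ext
    have h : gBase d m s x y = gBase d m s y x := by
      rcases x with _|_|⟨l,j⟩ <;> rcases y with _|_|⟨l',j'⟩ <;> simp only [gBase]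
      rw [Nat.min_comm l'.val l.val, Nat.min_comm j'.val j.val, Nat.add_comm j'.val j.val]
    simp only [h]
  · -- properness
    intro x y z hxy hxz hyz
    rw [hadj] at hxy hxz
    obtain ⟨hne1, h1⟩ := hxy
    obtain ⟨hne2, h2⟩ := hxz
    rcases x with _|_|⟨l,j⟩ <;> rcases y with _|_|⟨l2,j2⟩ <;> rcases z with _|_|⟨l3,j3⟩ <;>
        simp only [gadRel, or_self, false_or, or_false] at h1 h2
    case u.inner.inner =>
      simp only [gBase]
      have hll : l2 = l3 := Fin.ext (by omega)
      refine key j2.val j3.val (s + 1) (by have := j2.isLt; omega)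
        (by have := j3.isLt; omega) ?_ _ _ (by omega) (by omega)
      intro h
      exact hyz (by rw [hll, show j2 = j3 from Fin.ext h])
    case v.inner.inner =>
      simp only [gBase]
      have hll : l2 = l3 := Fin.ext (by omega)
      refine key j2.val j3.val (s + 1) (by have := j2.isLt; omega)
        (by have := j3.isLt; omega) ?_ _ _ (by omega) (by omega)
      intro h
      exact hyz (by rw [hll, show j2 = j3 from Fin.ext h])
    case inner.u.u => exact absurd rfl hyz
    case inner.v.v => exact absurd rfl hyz
    case inner.u.v => exfalso; omega
    case inner.v.u => exfalso; omega
    case inner.u.inner =>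
      have hj3d := j3.isLt; have hjd := j.isLt
      rcases h2 with ⟨ha2, hb2⟩ | ⟨ha2, hb2⟩
      · simp only [gBase]
        refine key 0 (j3.val + 1) (j.val + s + 1) (by omega) (by omega) (by omega)
          _ _ (by omega) ?_
        rw [if_pos (by rw [Nat.even_iff]; omega)]
        omega
      · exfalso; omega
    case inner.v.inner =>
      have hj3d := j3.isLt; have hjd := j.isLt; have hl3d := l3.isLt
      rcases h2 with ⟨ha2, hb2⟩ | ⟨ha2, hb2⟩
      · exfalso; omega
      · simp only [gBase]
        refine key 0 (j3.val + 1) (j.val + s + 1) (by omega) (by omega) (by omega)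
          _ _ (by omega) ?_
        rw [if_pos (by rw [Nat.even_iff]; omega)]
        omega
    case inner.inner.u =>
      have hj2d := j2.isLt; have hjd := j.isLt
      rcases h1 with ⟨ha1, hb1⟩ | ⟨ha1, hb1⟩
      · simp only [gBase]
        refine key (j2.val + 1) 0 (j.val + s + 1) (by omega) (by omega) (by omega)
          _ _ ?_ (by omega)
        rw [if_pos (by rw [Nat.even_iff]; omega)]
        omega
      · exfalso; omega
    case inner.inner.v =>
      have hj2d := j2.isLt; have hjd := j.isLt; have hl2d := l2.isLt
      rcases h1 with ⟨ha1, hb1⟩ | ⟨ha1, hb1⟩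
      · exfalso; omega
      · simp only [gBase]
        refine key (j2.val + 1) 0 (j.val + s + 1) (by omega) (by omega) (by omega)
          _ _ ?_ (by omega)
        rw [if_pos (by rw [Nat.even_iff]; omega)]
        omega
    case inner.inner.inner =>
      have hj2d := j2.isLt; have hj3d := j3.isLt; have hjd := j.isLt
      simp only [gBase]
      rcases h1 with ⟨ha1, hb1⟩ | ⟨ha1, hb1⟩ <;> rcases h2 with ⟨ha2, hb2⟩ | ⟨ha2, hb2⟩ <;>
        rcases Nat.even_or_odd l.val with he | ho
      · -- above/above, Even l : two complete edges
        have hp := Nat.even_iff.mp he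
        have hll : l2 = l3 := Fin.ext (by omega)
        refine key (j2.val + 1) (j3.val + 1) (j.val + s + 1) (by omega) (by omega) ?_
          _ _ ?_ ?_
        · intro h
          exact hyz (by rw [hll, show j2 = j3 from Fin.ext (by omega)])
        · rw [if_pos (by rw [Nat.even_iff]; omega)]; omega
        · rw [if_pos (by rw [Nat.even_iff]; omega)]; omega
      · -- above/above, Odd l : two matching edges, impossible
        have hp := Nat.odd_iff.mp ho
        exfalso
        rcases hb1 with hodd | hj2
        · rw [Nat.odd_iff] at hodd; omega
        rcases hb2 with hodd | hj3
        · rw [Nat.odd_iff] at hodd; omega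
        exact hyz (by rw [show l2 = l3 from Fin.ext (by omega),
          show j2 = j3 from by rw [← hj2, ← hj3]])
      · -- above/below, Even l
        have hp := Nat.even_iff.mp he
        rcases hb2 with hodd | hj3
        · exfalso; rw [Nat.odd_iff] at hodd; omega
        have hv3 := congrArg Fin.val hj3
        refine key (j2.val + 1) 0 (j.val + s + 1) (by omega) (by omega) (by omega)
          _ _ ?_ ?_
        · rw [if_pos (by rw [Nat.even_iff]; omega)]; omega
        · rw [if_neg (by rw [Nat.even_iff]; omega)]; omega
      · -- above/below, Odd l
        have hp := Nat.odd_iff.mp ho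
        rcases hb1 with hodd | hj2
        · exfalso; rw [Nat.odd_iff] at hodd; omega
        have hv2 := congrArg Fin.val hj2
        refine key 0 (j3.val + 1) (j.val + s + 1) (by omega) (by omega) (by omega)
          _ _ ?_ ?_
        · rw [if_neg (by rw [Nat.even_iff]; omega)]; omega
        · rw [if_pos (by rw [Nat.even_iff]; omega)]; omega
      · -- below/above, Even l
        have hp := Nat.even_iff.mp he
        rcases hb1 with hodd | hj2
        · exfalso; rw [Nat.odd_iff] at hodd; omega
        have hv2 := congrArg Fin.val hj2
        refine key 0 (j3.val + 1) (j.val + s + 1) (by omega) (by omega) (by omega)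
          _ _ ?_ ?_
        · rw [if_neg (by rw [Nat.even_iff]; omega)]; omega
        · rw [if_pos (by rw [Nat.even_iff]; omega)]; omega
      · -- below/above, Odd l
        have hp := Nat.odd_iff.mp ho
        rcases hb2 with hodd | hj3
        · exfalso; rw [Nat.odd_iff] at hodd; omega
        have hv3 := congrArg Fin.val hj3
        refine key (j2.val + 1) 0 (j.val + s + 1) (by omega) (by omega) (by omega)
          _ _ ?_ ?_
        · rw [if_pos (by rw [Nat.even_iff]; omega)]; omega
        · rw [if_neg (by rw [Nat.even_iff]; omega)]; omega
      · -- below/below, Even l : two matching edges, impossible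
        have hp := Nat.even_iff.mp he
        exfalso
        rcases hb1 with hodd | hj2
        · rw [Nat.odd_iff] at hodd; omega
        rcases hb2 with hodd | hj3
        · rw [Nat.odd_iff] at hodd; omega
        exact hyz (by rw [show l2 = l3 from Fin.ext (by omega),
          show j2 = j3 from by rw [hj2, hj3]])
      · -- below/below, Odd l : two complete edges
        have hp := Nat.odd_iff.mp ho
        have hll : l2 = l3 := Fin.ext (by omega)
        refine key (j2.val + 1) (j3.val + 1) (j.val + s + 1) (by omega) (by omega) ?_
          _ _ ?_ ?_
        · intro h
          exact hyz (by rw [hll, show j2 = j3 from Fin.ext (by omega)])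
        · rw [if_pos (by rw [Nat.even_iff]; omega)]; omega
        · rw [if_pos (by rw [Nat.even_iff]; omega)]; omega
  · -- surjectivity at inner vertices
    intro l j c
    have hjd := j.isLt
    have hld := l.isLt
    have hm2 : 2 * m % 2 = 0 := by omega
    obtain ⟨t, htd, hteq⟩ := modSurj hd0 (j.val + s + 1) c.isLt
    rcases t with _ | t'
    · -- the special (matching / u / v) neighbor
      rcases Nat.even_or_odd l.val with he | ho
      · have hp := Nat.even_iff.mp he
        rcases Nat.eq_zero_or_pos l.val with h0 | hpos
        · refine ⟨GadV.u, ?_, ?_⟩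
          · rw [hadj]
            exact ⟨fun h => (by cases h), Or.inr h0⟩
          · apply Fin.ext
            show (j.val + s + 1) % d = c.val
            simpa using hteq
        · have hlt : l.val - 1 < 2 * m := by omega
          refine ⟨GadV.inner ⟨l.val - 1, hlt⟩ j, ?_, ?_⟩
          · rw [hadj]
            refine ⟨?_, Or.inr ⟨show l.val = l.val - 1 + 1 by omega, Or.inr rfl⟩⟩
            intro h
            injection h with h1 h2
            have := congrArg Fin.val h1
            simp only [Fin.val_mk] at this  -- might fail; fallback
            omega
          · apply Fin.ext
            show (if Even (min l.val (l.val - 1)) then j.val + j.val + s + 2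
              else min j.val j.val + s + 1) % d = c.val
            rw [if_neg (by rw [Nat.even_iff]; omega), Nat.min_self]
            simpa using hteq
      · have hp := Nat.odd_iff.mp ho
        by_cases hb : l.val + 1 = 2 * m
        · refine ⟨GadV.v, ?_, ?_⟩
          · rw [hadj]
            exact ⟨fun h => (by cases h), Or.inr hb⟩
          · apply Fin.ext
            show (j.val + s + 1) % d = c.val
            simpa using hteq
        · have hlt : l.val + 1 < 2 * m := by omega
          refine ⟨GadV.inner ⟨l.val + 1, hlt⟩ j, ?_, ?_⟩
          · rw [hadj]
            refine ⟨?_, Or.inl ⟨rfl, Or.inr rfl⟩⟩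
            intro h
            injection h with h1 h2
            have := congrArg Fin.val h1
            simp only [Fin.val_mk] at this
            omega
          · apply Fin.ext
            show (if Even (min l.val (l.val + 1)) then j.val + j.val + s + 2
              else min j.val j.val + s + 1) % d = c.val
            rw [if_neg (by rw [Nat.even_iff]; omega), Nat.min_self]
            simpa using hteq
    · -- a complete-join neighbor
      have ht'd : t' < d - 1 := by omega
      rcases Nat.even_or_odd l.val with he | ho
      · have hp := Nat.even_iff.mp he
        have hlt : l.val + 1 < 2 * m := by omega
        refine ⟨GadV.inner ⟨l.val + 1, hlt⟩ ⟨t', ht'd⟩, ?_, ?_⟩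
        · rw [hadj]
          refine ⟨?_, Or.inl ⟨rfl, Or.inl (by rw [Nat.odd_iff]; omega)⟩⟩
          intro h
          injection h with h1 h2
          have := congrArg Fin.val h1
          simp only [Fin.val_mk] at this
          omega
        · apply Fin.ext
          show (if Even (min l.val (l.val + 1)) then j.val + t' + s + 2
            else min j.val t' + s + 1) % d = c.val
          rw [if_pos (by rw [Nat.even_iff]; omega),
            show j.val + t' + s + 2 = j.val + s + 1 + (t' + 1) by omega]
          exact hteq
      · have hp := Nat.odd_iff.mp ho
        have hlt : l.val - 1 < 2 * m := by omega
        refine ⟨GadV.inner ⟨l.val - 1, hlt⟩ ⟨t', ht'd⟩, ?_, ?_⟩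
        · rw [hadj]
          refine ⟨?_, Or.inr ⟨show l.val = l.val - 1 + 1 by omega,
            Or.inl (show Odd (l.val - 1 + 1) by rw [Nat.odd_iff]; omega)⟩⟩
          intro h
          injection h with h1 h2
          have := congrArg Fin.val h1
          simp only [Fin.val_mk] at this
          omega
        · apply Fin.ext
          show (if Even (min l.val (l.val - 1)) then j.val + t' + s + 2
            else min j.val t' + s + 1) % d = c.val
          rw [if_pos (by rw [Nat.even_iff]; omega),
            show j.val + t' + s + 2 = j.val + s + 1 + (t' + 1) by omega]
          exact hteq
  · -- u misses i
    intro y hy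
    rw [hadj] at hy
    obtain ⟨hne, h⟩ := hy
    rcases y with _ | _ | ⟨l, j⟩ <;> simp only [gadRel, or_self, false_or, or_false] at h
    intro hcol
    have hjd := j.isLt
    have hv : (j.val + s + 1) % d = i.val := by
      have := congrArg Fin.val hcol
      simpa [gBase] using this
    refine modNe (d := d) s (a := j.val + 1) (b := 0) (by omega) (by omega) (by omega) ?_
    rw [Nat.zero_add, Nat.mod_eq_of_lt hsd, show j.val + 1 + s = j.val + s + 1 by omega, hs]
    exact hv
  · -- v misses i
    intro y hy
    rw [hadj] at hy
    obtain ⟨hne, h⟩ := hy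
    rcases y with _ | _ | ⟨l, j⟩ <;> simp only [gadRel, or_self, false_or, or_false] at h
    intro hcol
    have hjd := j.isLt
    have hv : (j.val + s + 1) % d = i.val := by
      have := congrArg Fin.val hcol
      simpa [gBase] using this
    refine modNe (d := d) s (a := j.val + 1) (b := 0) (by omega) (by omega) (by omega) ?_
    rw [Nat.zero_add, Nat.mod_eq_of_lt hsd, show j.val + 1 + s = j.val + s + 1 by omega, hs]
    exact hv
end
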